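/- Let f: [0,∞) → [0,∞] be upper semi-continuous and increasing with f(0)=0. Define F_f^{min/max} := {A ∈ Sym(n) : λ_max(A) ≥ 0 and λ_min(A) + f(λ_max(A)) ≥ 0}. Then F_f^{min/max} is closed, satisfies positivity (F + P ⊆ F), is invariant under orthogonal conjugation, and is borderline, i.e., F_f^{min/max} ∩ (−P) = {0}. -/

import Mathlib

open Pointwise Matrix
open scoped ENNReal

/-- The space of symmetric (self-adjoint) real `n × n` matrices. -/
abbrev SymSpace (n : ℕ) : Type := selfAdjoint (Matrix (Fin n) (Fin n) ℝ)

/-- The cone `P` of positive semidefinite symmetric matrices. -/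
def PSDcone (n : ℕ) : Set (SymSpace n) :=
  {A | (A : Matrix (Fin n) (Fin n) ℝ).PosSemidef}

/-- The Dirichlet dual `F̃ = Sym(n) \ (-interior F)`. -/
def dirDual {n : ℕ} (F : Set (SymSpace n)) : Set (SymSpace n) :=
  {A | -A ∉ interior F}

/-- The eigenvalues of a symmetric real matrix. -/
noncomputable def symEigs {n : ℕ} (A : SymSpace n) : Fin n → ℝ :=
  (show (A : Matrix (Fin n) (Fin n) ℝ).IsHermitian from A.2).eigenvalues

/-- The smallest eigenvalue of a symmetric real matrix. -/
noncomputable def lambdaMin {n : ℕ} (A : SymSpace n) : ℝ := ⨅ i, symEigs A i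

/-- The largest eigenvalue of a symmetric real matrix. -/
noncomputable def lambdaMax {n : ℕ} (A : SymSpace n) : ℝ := ⨆ i, symEigs A i

/-- The min/max subequation `F_f^{min/max} = {A : λ_max(A) ≥ 0 ∧ λ_min(A) + f(λ_max(A)) ≥ 0}`. -/
noncomputable def FminMax (n : ℕ) (f : ℝ → ℝ≥0∞) : Set (SymSpace n) :=
  {A | 0 ≤ lambdaMax A ∧
       (0 : EReal) ≤ (lambdaMin A : EReal) + ((f (lambdaMax A) : ℝ≥0∞) : EReal)}

open scoped RealInnerProductSpace

variable {n : ℕ}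

/-- quadratic form -/
noncomputable def qf (A : Matrix (Fin n) (Fin n) ℝ) (x : EuclideanSpace ℝ (Fin n)) : ℝ :=
  ⟪x, Matrix.toEuclideanLin A x⟫

lemma qf_add (A B : Matrix (Fin n) (Fin n) ℝ) (x : EuclideanSpace ℝ (Fin n)) :
    qf (A + B) x = qf A x + qf B x := by
  simp [qf, map_add, inner_add_right]

lemma qf_eq_dot (A : Matrix (Fin n) (Fin n) ℝ) (x : EuclideanSpace ℝ (Fin n)) :
    qf A x = (WithLp.equiv 2 (Fin n → ℝ) x) ⬝ᵥ (A *ᵥ (WithLp.equiv 2 (Fin n → ℝ) x)) := by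
  rw [qf, EuclideanSpace.inner_eq_star_dotProduct, dotProduct_comm]
  rfl

lemma qf_eq_sum {A : Matrix (Fin n) (Fin n) ℝ} (hA : A.IsHermitian)
    (x : EuclideanSpace ℝ (Fin n)) :
    qf A x = ∑ i, hA.eigenvalues i * (hA.eigenvectorBasis.repr x i)^2 := by
  set b := hA.eigenvectorBasis
  have hb : ∀ i, Matrix.toEuclideanLin A (b i) = hA.eigenvalues i • b i := by
    intro i
    apply (WithLp.equiv 2 (Fin n → ℝ)).injective
    simp only [WithLp.equiv_apply, Matrix.ofLp_toEuclideanLin_apply]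
    have := hA.mulVec_eigenvectorBasis i
    simpa using this
  have hx : Matrix.toEuclideanLin A x = ∑ i, (hA.eigenvalues i * b.repr x i) • b i := by
    nth_rewrite 1 [← b.sum_repr x]
    rw [map_sum]
    refine Finset.sum_congr rfl fun i _ => ?_
    rw [_root_.map_smul, hb i, smul_smul, mul_comm]
  rw [qf, hx, inner_sum]
  refine Finset.sum_congr rfl fun i _ => ?_
  rw [real_inner_smul_right, real_inner_comm, ← b.repr_apply_apply]
  ring

lemma inner_self_eq_sum {ι : Type*} [Fintype ι] {E : Type*} [NormedAddCommGroup E]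
    [InnerProductSpace ℝ E] (b : OrthonormalBasis ι ℝ E) (x : E) :
    ⟪x, x⟫ = ∑ i, (b.repr x i)^2 := by
  rw [← b.repr.inner_map_map x x, PiLp.inner_apply]
  refine Finset.sum_congr rfl fun i _ => ?_
  simp [sq]

/-- eigenvector attains -/
lemma qf_eigenvectorBasis {A : Matrix (Fin n) (Fin n) ℝ} (hA : A.IsHermitian) (i : Fin n) :
    qf A (hA.eigenvectorBasis i) = hA.eigenvalues i ∧
      ⟪(hA.eigenvectorBasis i : EuclideanSpace ℝ (Fin n)), hA.eigenvectorBasis i⟫ = 1 := by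
  have h1 : ⟪(hA.eigenvectorBasis i : EuclideanSpace ℝ (Fin n)), hA.eigenvectorBasis i⟫ = 1 := by
    have h := hA.eigenvectorBasis.orthonormal.1 i
    rw [real_inner_self_eq_norm_sq, h, one_pow]
  refine ⟨?_, h1⟩
  rw [qf_eq_sum hA]
  have : ∀ j, hA.eigenvectorBasis.repr (hA.eigenvectorBasis i) j = if j = i then 1 else 0 := by
    intro j
    rw [hA.eigenvectorBasis.repr_apply_apply]
    rcases eq_or_ne j i with h | h
    · subst h; simpa using h1
    · simpa [h] using hA.eigenvectorBasis.orthonormal.2 h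
  simp only [this]
  rw [Finset.sum_eq_single i] <;> simp +contextual

lemma SymSpace.herm (A : SymSpace n) : (A : Matrix (Fin n) (Fin n) ℝ).IsHermitian := A.2

lemma symEigs_def (A : SymSpace n) : symEigs A = A.herm.eigenvalues := rfl

lemma symEigs_le_lambdaMax (A : SymSpace n) (i : Fin n) : symEigs A i ≤ lambdaMax A :=
  le_ciSup (Set.Finite.bddAbove (Set.finite_range _)) i

lemma lambdaMin_le_symEigs (A : SymSpace n) (i : Fin n) : lambdaMin A ≤ symEigs A i :=
  ciInf_le (Set.Finite.bddBelow (Set.finite_range _)) i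

lemma qf_le_lambdaMax (A : SymSpace n) (x : EuclideanSpace ℝ (Fin n)) :
    qf (A : Matrix (Fin n) (Fin n) ℝ) x ≤ lambdaMax A * ⟪x, x⟫ := by
  rw [qf_eq_sum A.herm, inner_self_eq_sum A.herm.eigenvectorBasis, Finset.mul_sum]
  exact Finset.sum_le_sum fun i _ =>
    mul_le_mul_of_nonneg_right (symEigs_le_lambdaMax A i) (sq_nonneg _)

lemma lambdaMin_le_qf (A : SymSpace n) (x : EuclideanSpace ℝ (Fin n)) :
    lambdaMin A * ⟪x, x⟫ ≤ qf (A : Matrix (Fin n) (Fin n) ℝ) x := by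
  rw [qf_eq_sum A.herm, inner_self_eq_sum A.herm.eigenvectorBasis, Finset.mul_sum]
  exact Finset.sum_le_sum fun i _ =>
    mul_le_mul_of_nonneg_right (lambdaMin_le_symEigs A i) (sq_nonneg _)

lemma exists_unit_qf_max [Nonempty (Fin n)] (A : SymSpace n) :
    ∃ x : EuclideanSpace ℝ (Fin n), ⟪x, x⟫ = 1 ∧
      qf (A : Matrix (Fin n) (Fin n) ℝ) x = lambdaMax A := by
  obtain ⟨i, hi⟩ := exists_eq_ciSup_of_finite (f := symEigs A)
  exact ⟨A.herm.eigenvectorBasis i, (qf_eigenvectorBasis A.herm i).2,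
    ((qf_eigenvectorBasis A.herm i).1).trans hi⟩

lemma exists_unit_qf_min [Nonempty (Fin n)] (A : SymSpace n) :
    ∃ x : EuclideanSpace ℝ (Fin n), ⟪x, x⟫ = 1 ∧
      qf (A : Matrix (Fin n) (Fin n) ℝ) x = lambdaMin A := by
  obtain ⟨i, hi⟩ := exists_eq_ciInf_of_finite (f := symEigs A)
  exact ⟨A.herm.eigenvectorBasis i, (qf_eigenvectorBasis A.herm i).2,
    ((qf_eigenvectorBasis A.herm i).1).trans hi⟩

lemma qf_nonneg_of_psd {Q : Matrix (Fin n) (Fin n) ℝ} (hQ : Q.PosSemidef)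
    (x : EuclideanSpace ℝ (Fin n)) : 0 ≤ qf Q x := by
  rw [qf_eq_dot]
  simpa using hQ.dotProduct_mulVec_nonneg (WithLp.equiv 2 (Fin n → ℝ) x)

lemma lambdaMax_add_psd [Nonempty (Fin n)] (A Q : SymSpace n) (hQ : Q ∈ PSDcone n) :
    lambdaMax A ≤ lambdaMax (A + Q) := by
  obtain ⟨x, hx1, hx2⟩ := exists_unit_qf_max A
  have h1 : qf ((A + Q : SymSpace n) : Matrix (Fin n) (Fin n) ℝ) x
      = qf (A : Matrix (Fin n) (Fin n) ℝ) x + qf (Q : Matrix (Fin n) (Fin n) ℝ) x := by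
    rw [← qf_add]; rfl
  have h2 := qf_le_lambdaMax (A + Q) x
  rw [hx1, mul_one, h1] at h2
  have h3 := qf_nonneg_of_psd hQ x
  linarith

lemma lambdaMin_add_psd [Nonempty (Fin n)] (A Q : SymSpace n) (hQ : Q ∈ PSDcone n) :
    lambdaMin A ≤ lambdaMin (A + Q) := by
  obtain ⟨x, hx1, hx2⟩ := exists_unit_qf_min (A + Q)
  have h1 : qf ((A + Q : SymSpace n) : Matrix (Fin n) (Fin n) ℝ) x
      = qf (A : Matrix (Fin n) (Fin n) ℝ) x + qf (Q : Matrix (Fin n) (Fin n) ℝ) x := by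
    rw [← qf_add]; rfl
  have h2 := lambdaMin_le_qf A x
  rw [hx1, mul_one] at h2
  have h3 := qf_nonneg_of_psd hQ x
  linarith

/-- sum of absolute values of all entries -/
noncomputable def esum (A : Matrix (Fin n) (Fin n) ℝ) : ℝ := ∑ i, ∑ j, |A i j|

lemma esum_nonneg (A : Matrix (Fin n) (Fin n) ℝ) : 0 ≤ esum A :=
  Finset.sum_nonneg fun _ _ => Finset.sum_nonneg fun _ _ => abs_nonneg _

lemma esum_neg (A : Matrix (Fin n) (Fin n) ℝ) : esum (-A) = esum A := by
  simp [esum]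

lemma abs_qf_le_esum (A : Matrix (Fin n) (Fin n) ℝ) {x : EuclideanSpace ℝ (Fin n)}
    (hx : ⟪x, x⟫ = 1) : |qf A x| ≤ esum A := by
  set y := WithLp.equiv 2 (Fin n → ℝ) x with hy
  have hxy : ∀ i, |y i| ≤ 1 := by
    intro i
    have h1 : ⟪x, x⟫ = ∑ j, y j * y j := by
      rw [PiLp.inner_apply]; rfl
    have h2 : y i * y i ≤ 1 := by
      rw [← hx, h1]
      exact Finset.single_le_sum (f := fun j => y j * y j)
        (fun j _ => mul_self_nonneg _) (Finset.mem_univ i)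
    nlinarith [abs_nonneg (y i), abs_mul_abs_self (y i)]
  rw [qf_eq_dot]
  calc |dotProduct y (A *ᵥ y)| ≤ ∑ i, |y i * (A *ᵥ y) i| := by
        exact Finset.abs_sum_le_sum_abs _ _
    _ ≤ ∑ i, ∑ j, |A i j| := by
        refine Finset.sum_le_sum fun i _ => ?_
        rw [abs_mul]
        calc |y i| * |(A *ᵥ y) i| ≤ 1 * |(A *ᵥ y) i| :=
              mul_le_mul_of_nonneg_right (hxy i) (abs_nonneg _)
          _ = |∑ j, A i j * y j| := by rw [one_mul]; rfl
          _ ≤ ∑ j, |A i j * y j| := Finset.abs_sum_le_sum_abs _ _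
          _ ≤ ∑ j, |A i j| := by
              refine Finset.sum_le_sum fun j _ => ?_
              rw [abs_mul]
              calc |A i j| * |y j| ≤ |A i j| * 1 :=
                    mul_le_mul_of_nonneg_left (hxy j) (abs_nonneg _)
                _ = |A i j| := mul_one _
    _ = esum A := rfl

lemma lambdaMax_sub_le [Nonempty (Fin n)] (A B : SymSpace n) :
    lambdaMax A - lambdaMax B ≤ esum ((A : Matrix (Fin n) (Fin n) ℝ) - (B : Matrix (Fin n) (Fin n) ℝ)) := by
  obtain ⟨x, hx1, hx2⟩ := exists_unit_qf_max A
  have h1 : qf (A : Matrix (Fin n) (Fin n) ℝ) x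
      = qf (B : Matrix (Fin n) (Fin n) ℝ) x
        + qf ((A : Matrix (Fin n) (Fin n) ℝ) - (B : Matrix (Fin n) (Fin n) ℝ)) x := by
    rw [← qf_add]
    congr 1
    abel
  have h2 := qf_le_lambdaMax B x
  rw [hx1, mul_one] at h2
  have h3 := (abs_le.1 (abs_qf_le_esum ((A : Matrix (Fin n) (Fin n) ℝ) - (B : Matrix (Fin n) (Fin n) ℝ)) hx1)).2
  linarith

lemma lambdaMin_sub_le [Nonempty (Fin n)] (A B : SymSpace n) :
    lambdaMin A - lambdaMin B ≤ esum ((A : Matrix (Fin n) (Fin n) ℝ) - (B : Matrix (Fin n) (Fin n) ℝ)) := by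
  obtain ⟨x, hx1, hx2⟩ := exists_unit_qf_min B
  have h1 : qf (A : Matrix (Fin n) (Fin n) ℝ) x
      = qf (B : Matrix (Fin n) (Fin n) ℝ) x
        + qf ((A : Matrix (Fin n) (Fin n) ℝ) - (B : Matrix (Fin n) (Fin n) ℝ)) x := by
    rw [← qf_add]
    congr 1
    abel
  have h2 := lambdaMin_le_qf A x
  rw [hx1, mul_one] at h2
  have h3 := (abs_le.1 (abs_qf_le_esum ((A : Matrix (Fin n) (Fin n) ℝ) - (B : Matrix (Fin n) (Fin n) ℝ)) hx1)).2
  linarith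

lemma abs_lambdaMax_sub [Nonempty (Fin n)] (A B : SymSpace n) :
    |lambdaMax A - lambdaMax B| ≤ esum ((A : Matrix (Fin n) (Fin n) ℝ) - (B : Matrix (Fin n) (Fin n) ℝ)) := by
  rw [abs_sub_le_iff]
  refine ⟨lambdaMax_sub_le A B, ?_⟩
  have := lambdaMax_sub_le B A
  rwa [show ((B : Matrix (Fin n) (Fin n) ℝ) - (A : Matrix (Fin n) (Fin n) ℝ)) = -((A : Matrix (Fin n) (Fin n) ℝ) - (B : Matrix (Fin n) (Fin n) ℝ)) by abel,
    esum_neg] at this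

lemma abs_lambdaMin_sub [Nonempty (Fin n)] (A B : SymSpace n) :
    |lambdaMin A - lambdaMin B| ≤ esum ((A : Matrix (Fin n) (Fin n) ℝ) - (B : Matrix (Fin n) (Fin n) ℝ)) := by
  rw [abs_sub_le_iff]
  refine ⟨lambdaMin_sub_le A B, ?_⟩
  have := lambdaMin_sub_le B A
  rwa [show ((B : Matrix (Fin n) (Fin n) ℝ) - (A : Matrix (Fin n) (Fin n) ℝ)) = -((A : Matrix (Fin n) (Fin n) ℝ) - (B : Matrix (Fin n) (Fin n) ℝ)) by abel,
    esum_neg] at this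

lemma qf_coe_zero (x : EuclideanSpace ℝ (Fin n)) :
    qf ((0 : SymSpace n) : Matrix (Fin n) (Fin n) ℝ) x = 0 := by
  rw [qf, show ((0 : SymSpace n) : Matrix (Fin n) (Fin n) ℝ) = 0 from rfl]
  simp

lemma symEigs_zero (i : Fin n) : symEigs (0 : SymSpace n) i = 0 := by
  have h := (qf_eigenvectorBasis (0 : SymSpace n).herm i).1
  rw [symEigs_def, ← h, qf_coe_zero]

lemma eq_zero_of_symEigs_eq_zero {A : SymSpace n} (h : ∀ i, symEigs A i = 0) : A = 0 := by
  apply Subtype.ext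
  have hs := A.herm.spectral_theorem
  have hd : Matrix.diagonal (RCLike.ofReal ∘ A.herm.eigenvalues) = (0 : Matrix (Fin n) (Fin n) ℝ) := by
    have : A.herm.eigenvalues = fun _ => 0 := funext fun i => h i
    rw [this]
    ext i j
    simp [Matrix.diagonal]
  rw [hd] at hs
  simpa using hs

lemma lambdaMax_conj_le [Nonempty (Fin n)] (A B : SymSpace n) (Q : Matrix (Fin n) (Fin n) ℝ)
    (hQ : Qᵀ * Q = 1)
    (hB : (B : Matrix (Fin n) (Fin n) ℝ) = Qᵀ * (A : Matrix (Fin n) (Fin n) ℝ) * Q) :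
    lambdaMax B ≤ lambdaMax A ∧ lambdaMin A ≤ lambdaMin B := by
  have key : ∀ x : EuclideanSpace ℝ (Fin n), ∃ z : EuclideanSpace ℝ (Fin n),
      ⟪z, z⟫ = ⟪x, x⟫ ∧ qf (B : Matrix (Fin n) (Fin n) ℝ) x
        = qf (A : Matrix (Fin n) (Fin n) ℝ) z := by
    intro x
    set y := WithLp.equiv 2 (Fin n → ℝ) x with hy
    refine ⟨(WithLp.equiv 2 (Fin n → ℝ)).symm (Q *ᵥ y), ?_, ?_⟩
    · rw [EuclideanSpace.inner_eq_star_dotProduct, EuclideanSpace.inner_eq_star_dotProduct,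
        star_trivial, star_trivial]
      show (Q *ᵥ y) ⬝ᵥ (Q *ᵥ y) = y ⬝ᵥ y
      calc (Q *ᵥ y) ⬝ᵥ (Q *ᵥ y) = ((Q *ᵥ y) ᵥ* Q) ⬝ᵥ y := Matrix.dotProduct_mulVec _ _ _
        _ = ((y ᵥ* Qᵀ) ᵥ* Q) ⬝ᵥ y := by rw [Matrix.vecMul_transpose]
        _ = (y ᵥ* (Qᵀ * Q)) ⬝ᵥ y := by rw [Matrix.vecMul_vecMul]
        _ = y ⬝ᵥ y := by rw [hQ, Matrix.vecMul_one]
    · rw [qf_eq_dot, qf_eq_dot, Equiv.apply_symm_apply, hB]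
      calc y ⬝ᵥ ((Qᵀ * (A : Matrix (Fin n) (Fin n) ℝ) * Q) *ᵥ y)
          = y ⬝ᵥ (Qᵀ *ᵥ (((A : Matrix (Fin n) (Fin n) ℝ) * Q) *ᵥ y)) := by
            rw [Matrix.mulVec_mulVec, ← Matrix.mul_assoc]
        _ = (y ᵥ* Qᵀ) ⬝ᵥ (((A : Matrix (Fin n) (Fin n) ℝ) * Q) *ᵥ y) :=
            Matrix.dotProduct_mulVec _ _ _
        _ = (Q *ᵥ y) ⬝ᵥ ((A : Matrix (Fin n) (Fin n) ℝ) *ᵥ (Q *ᵥ y)) := by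
            rw [Matrix.vecMul_transpose, Matrix.mulVec_mulVec]
  constructor
  · obtain ⟨x, hx1, hx2⟩ := exists_unit_qf_max B
    obtain ⟨z, hz1, hz2⟩ := key x
    have := qf_le_lambdaMax A z
    rw [hz1, hx1, mul_one] at this
    rw [← hx2, hz2]
    exact this
  · obtain ⟨x, hx1, hx2⟩ := exists_unit_qf_min B
    obtain ⟨z, hz1, hz2⟩ := key x
    have := lambdaMin_le_qf A z
    rw [hz1, hx1, mul_one] at this
    rw [← hx2, hz2]
    exact this

lemma lambda_conj_eq [Nonempty (Fin n)] (A B : SymSpace n) (Q : Matrix (Fin n) (Fin n) ℝ)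
    (hQ : Qᵀ * Q = 1)
    (hB : (B : Matrix (Fin n) (Fin n) ℝ) = Qᵀ * (A : Matrix (Fin n) (Fin n) ℝ) * Q) :
    lambdaMax B = lambdaMax A ∧ lambdaMin B = lambdaMin A := by
  have hQ2 : Q * Qᵀ = 1 := mul_eq_one_comm.1 hQ
  have hQ' : Qᵀᵀ * Qᵀ = 1 := by rw [Matrix.transpose_transpose]; exact hQ2
  have hA : (A : Matrix (Fin n) (Fin n) ℝ) = Qᵀᵀ * (B : Matrix (Fin n) (Fin n) ℝ) * Qᵀ := by
    rw [Matrix.transpose_transpose, hB]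
    calc (A : Matrix (Fin n) (Fin n) ℝ)
        = 1 * (A : Matrix (Fin n) (Fin n) ℝ) * 1 := by rw [one_mul, mul_one]
      _ = (Q * Qᵀ) * (A : Matrix (Fin n) (Fin n) ℝ) * (Q * Qᵀ) := by rw [hQ2]
      _ = Q * (Qᵀ * (A : Matrix (Fin n) (Fin n) ℝ) * Q) * Qᵀ := by
          simp only [Matrix.mul_assoc]
  obtain ⟨h1, h2⟩ := lambdaMax_conj_le A B Q hQ hB
  obtain ⟨h3, h4⟩ := lambdaMax_conj_le B A Qᵀ hQ' hA
  exact ⟨le_antisymm h1 h3, le_antisymm h4 h2⟩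

lemma qf_neg (A : Matrix (Fin n) (Fin n) ℝ) (x : EuclideanSpace ℝ (Fin n)) :
    qf (-A) x = -qf A x := by
  simp [qf, map_neg, inner_neg_right]

instance matrixFirstCountable (n : ℕ) :
    FirstCountableTopology (Matrix (Fin n) (Fin n) ℝ) :=
  (inferInstance : FirstCountableTopology (Fin n → Fin n → ℝ))

open Filter in
/-- For `f : [0,∞) → [0,∞]` upper semi-continuous, increasing, with `f(0) = 0`, the set
`F_f^{min/max}` is closed, satisfies positivity, is orthogonally invariant, and is borderline:
`F_f^{min/max} ∩ (−P) = {0}`. -/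
theorem FminMax_borderline (n : ℕ) (f : ℝ → ℝ≥0∞)
    (husc : UpperSemicontinuousOn f (Set.Ici 0))
    (hmono : MonotoneOn f (Set.Ici 0)) (hf0 : f 0 = 0) :
    IsClosed (FminMax n f) ∧
    FminMax n f + PSDcone n ⊆ FminMax n f ∧
    (∀ (A B : SymSpace n) (Q : Matrix (Fin n) (Fin n) ℝ), Qᵀ * Q = 1 →
      (B : Matrix (Fin n) (Fin n) ℝ) = Qᵀ * (A : Matrix (Fin n) (Fin n) ℝ) * Q →
        (A ∈ FminMax n f ↔ B ∈ FminMax n f)) ∧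
    FminMax n f ∩ (-PSDcone n) = {0} := by
  have hzero_psd : (0 : SymSpace n) ∈ -PSDcone n := by
    rw [Set.mem_neg]
    show ((-(0 : SymSpace n) : SymSpace n) : Matrix (Fin n) (Fin n) ℝ).PosSemidef
    rw [neg_zero]
    show (0 : Matrix (Fin n) (Fin n) ℝ).PosSemidef
    exact Matrix.PosSemidef.zero
  rcases Nat.eq_zero_or_pos n with hn | hn
  · -- degenerate case n = 0
    subst hn
    have hsub : ∀ A : SymSpace 0, A = 0 := by
      intro A
      apply Subtype.ext
      ext i j
      exact i.elim0
    have hF : FminMax 0 f = Set.univ := by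
      ext A
      simp only [FminMax, Set.mem_setOf_eq, Set.mem_univ, iff_true]
      have h1 : lambdaMax A = 0 := Real.iSup_of_isEmpty _
      have h2 : lambdaMin A = 0 := Real.iInf_of_isEmpty _
      rw [h1, h2, hf0, EReal.coe_ennreal_zero, EReal.coe_zero, add_zero]
      exact ⟨le_refl _, le_refl _⟩
    refine ⟨hF ▸ isClosed_univ, by rw [hF]; exact fun _ _ => Set.mem_univ _, ?_, ?_⟩
    · intro A B Q hQ hB
      simp [hF]
    · rw [hF, Set.univ_inter]
      ext A
      simp only [Set.mem_singleton_iff]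
      exact ⟨fun _ => hsub A, fun h => h ▸ hzero_psd⟩
  · haveI : Nonempty (Fin n) := ⟨⟨0, hn⟩⟩
    -- closedness
    have hclosed : IsClosed (FminMax n f) := by
      apply IsSeqClosed.isClosed
      intro B A hB hBA
      have hent : ∀ i j, Tendsto (fun k => ((B k : Matrix (Fin n) (Fin n) ℝ)) i j) atTop
          (nhds ((A : Matrix (Fin n) (Fin n) ℝ) i j)) := by
        intro i j
        have h1 : Tendsto (fun k => ((B k : SymSpace n) : Matrix (Fin n) (Fin n) ℝ)) atTop
            (nhds (A : Matrix (Fin n) (Fin n) ℝ)) :=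
          (continuous_subtype_val.tendsto _).comp hBA
        exact (((continuous_apply j).comp (continuous_apply i)).tendsto _).comp h1
      have habs : ∀ i j, Tendsto
          (fun k => |((B k : Matrix (Fin n) (Fin n) ℝ) - (A : Matrix (Fin n) (Fin n) ℝ)) i j|)
          atTop (nhds 0) := by
        intro i j
        have := ((hent i j).sub (tendsto_const_nhds (x := (A : Matrix (Fin n) (Fin n) ℝ) i j))).abs
        simpa using this
      have hesum : Tendsto
          (fun k => esum ((B k : Matrix (Fin n) (Fin n) ℝ) - (A : Matrix (Fin n) (Fin n) ℝ)))
          atTop (nhds 0) := by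
        have := tendsto_finset_sum (Finset.univ : Finset (Fin n))
          (fun i _ => tendsto_finset_sum (Finset.univ : Finset (Fin n)) (fun j _ => habs i j))
        simpa [esum] using this
      have hmax : Tendsto (fun k => lambdaMax (B k)) atTop (nhds (lambdaMax A)) := by
        have h0 : Tendsto (fun k => lambdaMax (B k) - lambdaMax A) atTop (nhds 0) :=
          squeeze_zero_norm (fun k => by
            simpa [Real.norm_eq_abs] using abs_lambdaMax_sub (B k) A) hesum
        have := h0.add_const (lambdaMax A)
        simpa using this
      have hmin : Tendsto (fun k => lambdaMin (B k)) atTop (nhds (lambdaMin A)) := by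
        have h0 : Tendsto (fun k => lambdaMin (B k) - lambdaMin A) atTop (nhds 0) :=
          squeeze_zero_norm (fun k => by
            simpa [Real.norm_eq_abs] using abs_lambdaMin_sub (B k) A) hesum
        have := h0.add_const (lambdaMin A)
        simpa using this
      have hmax0 : 0 ≤ lambdaMax A := ge_of_tendsto' hmax (fun k => (hB k).1)
      refine ⟨hmax0, ?_⟩
      by_contra hcon
      rw [not_le] at hcon
      rcases eq_or_ne (f (lambdaMax A)) ⊤ with htop | htop
      · rw [htop] at hcon
        rw [EReal.coe_ennreal_top, EReal.coe_add_top] at hcon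
        exact (not_lt_of_ge le_top) hcon
      lift f (lambdaMax A) to NNReal using htop with r hr
      rw [EReal.coe_nnreal_eq_coe_real, ← EReal.coe_add, ← EReal.coe_zero,
        EReal.coe_lt_coe_iff] at hcon
      set t : ℝ := ((r : ℝ) + (-(lambdaMin A))) / 2 with ht
      have hrt : (r : ℝ) < t := by rw [ht]; linarith
      have htmin : lambdaMin A + t < 0 := by rw [ht]; linarith
      have ht0 : 0 ≤ t := le_trans r.coe_nonneg hrt.le
      have hflt : f (lambdaMax A) < ENNReal.ofReal t := by
        rw [← hr]
        exact (ENNReal.lt_ofReal_iff_toReal_lt ENNReal.coe_ne_top).2 (by simpa using hrt)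
      have husc2 := husc (lambdaMax A) hmax0 (ENNReal.ofReal t) hflt
      have htend : Tendsto (fun k => lambdaMax (B k)) atTop
          (nhdsWithin (lambdaMax A) (Set.Ici 0)) :=
        tendsto_nhdsWithin_iff.2 ⟨hmax, Eventually.of_forall fun k => (hB k).1⟩
      have hev1 : ∀ᶠ k in atTop, f (lambdaMax (B k)) < ENNReal.ofReal t :=
        htend.eventually husc2
      have hev2 : ∀ᶠ k in atTop, lambdaMin (B k) + t < 0 := by
        have h3 := hmin.eventually_lt_const (show lambdaMin A < -t by linarith)
        filter_upwards [h3] with k hk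
        linarith
      obtain ⟨k, hk1, hk2⟩ := (hev1.and hev2).exists
      have hle := (hB k).2
      have hstep : (lambdaMin (B k) : EReal) + ((f (lambdaMax (B k)) : ℝ≥0∞) : EReal)
          ≤ ((lambdaMin (B k) + t : ℝ) : EReal) := by
        rw [EReal.coe_add]
        refine add_le_add_right ?_ _
        have h4 : ((f (lambdaMax (B k)) : ℝ≥0∞) : EReal)
            ≤ ((ENNReal.ofReal t : ℝ≥0∞) : EReal) :=
          EReal.coe_ennreal_le_coe_ennreal_iff.2 hk1.le
        refine h4.trans ?_
        rw [EReal.coe_ennreal_ofReal]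
        exact le_of_eq (by rw [max_eq_left ht0])
      have habsurd : (0 : EReal) < 0 :=
        lt_of_le_of_lt (hle.trans hstep) (by exact_mod_cast hk2)
      exact lt_irrefl _ habsurd
    refine ⟨hclosed, ?_, ?_, ?_⟩
    · -- positivity
      intro C hC
      rw [Set.mem_add] at hC
      obtain ⟨A, hA, Q, hQ, rfl⟩ := hC
      obtain ⟨h1, h2⟩ := hA
      have hmax := lambdaMax_add_psd A Q hQ
      have hmin := lambdaMin_add_psd A Q hQ
      refine ⟨le_trans h1 hmax, le_trans h2 ?_⟩
      refine add_le_add ?_ ?_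
      · exact_mod_cast hmin
      · exact EReal.coe_ennreal_le_coe_ennreal_iff.2
          (hmono h1 (le_trans h1 hmax) hmax)
    · -- invariance
      intro A B Q hQ hB
      obtain ⟨h1, h2⟩ := lambda_conj_eq A B Q hQ hB
      simp only [FminMax, Set.mem_setOf_eq, h1, h2]
    · -- borderline
      ext A
      simp only [Set.mem_inter_iff, Set.mem_singleton_iff, Set.mem_neg, FminMax, PSDcone,
        Set.mem_setOf_eq]
      constructor
      · rintro ⟨⟨h1, h2⟩, h3⟩
        have hmaxle : lambdaMax A ≤ 0 := by
          obtain ⟨x, hx1, hx2⟩ := exists_unit_qf_max A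
          have h4 := qf_nonneg_of_psd h3 x
          have h5 : ((-A : SymSpace n) : Matrix (Fin n) (Fin n) ℝ)
              = -(A : Matrix (Fin n) (Fin n) ℝ) := rfl
          rw [h5, qf_neg] at h4
          rw [← hx2]
          linarith
        have hmax0 : lambdaMax A = 0 := le_antisymm hmaxle h1
        rw [hmax0, hf0, EReal.coe_ennreal_zero, add_zero] at h2
        have hmin0 : 0 ≤ lambdaMin A := by exact_mod_cast h2
        apply eq_zero_of_symEigs_eq_zero
        intro i
        have h6 := symEigs_le_lambdaMax A i
        have h7 := lambdaMin_le_symEigs A i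
        rw [hmax0] at h6
        linarith
      · rintro rfl
        have hmax0 : lambdaMax (0 : SymSpace n) = 0 := by
          rw [lambdaMax]
          simp only [symEigs_zero]
          exact ciSup_const
        have hmin0 : lambdaMin (0 : SymSpace n) = 0 := by
          rw [lambdaMin]
          simp only [symEigs_zero]
          exact ciInf_const
        refine ⟨⟨le_of_eq hmax0.symm, ?_⟩, ?_⟩
        · rw [hmax0, hmin0, hf0, EReal.coe_ennreal_zero, EReal.coe_zero, add_zero]
        · exact Set.mem_neg.1 hzero_psd
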